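/- There exists a finite set S ⊂ ℂ containing 0 such that for every λ ∉ S and every (a,b,c,p) ∈ ℂ⁴ with c ≠ 0 satisfying λp² = −2a, λ²b = 4ac, 12ca³ = (2c³+1)λ, and 64c⁶ − (16λ⁶ − 32)c³ + λ⁶ = 0, the following holds with W = W(a,b,c,p): there exists a ℂ-linear map β : W → ℂ⁶ whose image is not contained in W such that ∇F_λ(P)·β(P) = 0 and ∇G_λ(P)·β(P) = 0 for every P ∈ W. (Together with the nonexistence of such a constant vector, this expresses that the normal bundle of the line W on X_λ is O ⊕ O(−2) and the Zariski tangent space of the Hilbert scheme of lines at this line is positive dimensional.) -/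

import Mathlib

noncomputable section

/-- The first cubic form defining the (3,3) pencil `X_λ`. -/
def Fcubic (l : ℂ) (x : Fin 6 → ℂ) : ℂ :=
  x 0 ^ 3 + x 1 ^ 3 + x 2 ^ 3 - 3 * l * x 3 * x 4 * x 5

/-- The second cubic form defining the (3,3) pencil `X_λ`. -/
def Gcubic (l : ℂ) (x : Fin 6 → ℂ) : ℂ :=
  x 3 ^ 3 + x 4 ^ 3 + x 5 ^ 3 - 3 * l * x 0 * x 1 * x 2

/-- The plane `W(a,b,c,p) ⊆ ℂ⁶`, spanned by `(1,−1,0,p,−p,0)` and `(a,a,b,c,c,1)`. -/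
def linePlane (a b c p : ℂ) : Submodule ℂ (Fin 6 → ℂ) :=
  Submodule.span ℂ {![1, -1, 0, p, -p, 0], ![a, a, b, c, c, 1]}

/-- The system of equations characterizing the 36 lines of Lemma 2.3. -/
def lineEqs (l a b c p : ℂ) : Prop :=
  l * p ^ 2 = -2 * a ∧ l ^ 2 * b = 4 * a * c ∧
    12 * c * a ^ 3 = (2 * c ^ 3 + 1) * l ∧
    64 * c ^ 6 - (16 * l ^ 6 - 32) * c ^ 3 + l ^ 6 = 0

/-- The subgroup `G ≤ (ℂˣ)⁶` generated by `α₁, α₂, α₃`, where `ω = ζ³`. -/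
def Gsub (z : ℂˣ) : Subgroup (Fin 6 → ℂˣ) :=
  Subgroup.closure
    {![1, z ^ 3, (z ^ 3)⁻¹, 1, 1, 1],
      ![1, 1, z ^ 3, z, z, (z ^ 2)⁻¹],
      ![1, 1, 1, 1, z ^ 3, (z ^ 3)⁻¹]}

/-- The subgroup `H ≤ S₆` generated by all permutations of the indices `{0,1,2}`
and all permutations of the indices `{3,4,5}`. -/
def Hsub : Subgroup (Equiv.Perm (Fin 6)) :=
  Subgroup.closure
    ({σ : Equiv.Perm (Fin 6) | ∀ i : Fin 6, 3 ≤ (i : ℕ) → σ i = i} ∪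
      {σ : Equiv.Perm (Fin 6) | ∀ i : Fin 6, (i : ℕ) < 3 → σ i = i})

/-- Componentwise multiplication by `g ∈ (ℂˣ)⁶` as a linear automorphism-inducing map. -/
def diagMap (g : Fin 6 → ℂˣ) : (Fin 6 → ℂ) →ₗ[ℂ] (Fin 6 → ℂ) :=
  LinearMap.pi fun i => (g i : ℂ) • LinearMap.proj i

/-- Coordinate permutation `x ↦ x ∘ σ` as a linear map. -/
def permMap (σ : Equiv.Perm (Fin 6)) : (Fin 6 → ℂ) →ₗ[ℂ] (Fin 6 → ℂ) :=
  LinearMap.funLeft ℂ ℂ σ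

lemma fderiv_Fcubic (l : ℂ) (x w : Fin 6 → ℂ) :
    fderiv ℂ (Fcubic l) x w =
      3*x 0^2*w 0 + 3*x 1^2*w 1 + 3*x 2^2*w 2
        - 3*l*(w 3*x 4*x 5 + x 3*w 4*x 5 + x 3*x 4*w 5) := by
  have h := fun i : Fin 6 => hasFDerivAt_apply (𝕜 := ℂ) (F' := fun _ : Fin 6 => ℂ) i x
  have H := ((((((h 0).mul (h 0)).mul (h 0)).add (((h 1).mul (h 1)).mul (h 1))).add
      (((h 2).mul (h 2)).mul (h 2))).sub
      ((((hasFDerivAt_const (3*l) x).mul (h 3)).mul (h 4)).mul (h 5)))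
  have hfun : Fcubic l = (fun y : Fin 6 → ℂ =>
      y 0*y 0*y 0 + y 1*y 1*y 1 + y 2*y 2*y 2 - 3*l*y 3*y 4*y 5) := by
    funext y; simp only [Fcubic]; ring
  rw [hfun, HasFDerivAt.fderiv (f := fun y : Fin 6 → ℂ =>
      y 0*y 0*y 0 + y 1*y 1*y 1 + y 2*y 2*y 2 - 3*l*y 3*y 4*y 5) H]
  simp [ContinuousLinearMap.proj]
  ring

lemma fderiv_Gcubic (l : ℂ) (x w : Fin 6 → ℂ) :
    fderiv ℂ (Gcubic l) x w =
      3*x 3^2*w 3 + 3*x 4^2*w 4 + 3*x 5^2*w 5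
        - 3*l*(w 0*x 1*x 2 + x 0*w 1*x 2 + x 0*x 1*w 2) := by
  have h := fun i : Fin 6 => hasFDerivAt_apply (𝕜 := ℂ) (F' := fun _ : Fin 6 => ℂ) i x
  have H := ((((((h 3).mul (h 3)).mul (h 3)).add (((h 4).mul (h 4)).mul (h 4))).add
      (((h 5).mul (h 5)).mul (h 5))).sub
      ((((hasFDerivAt_const (3*l) x).mul (h 0)).mul (h 1)).mul (h 2)))
  have hfun : Gcubic l = (fun y : Fin 6 → ℂ =>
      y 3*y 3*y 3 + y 4*y 4*y 4 + y 5*y 5*y 5 - 3*l*y 0*y 1*y 2) := by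
    funext y; simp only [Gcubic]; ring
  rw [hfun, HasFDerivAt.fderiv (f := fun y : Fin 6 → ℂ =>
      y 3*y 3*y 3 + y 4*y 4*y 4 + y 5*y 5*y 5 - 3*l*y 0*y 1*y 2) H]
  simp [ContinuousLinearMap.proj]
  ring


theorem stmt_11 :
    ∃ S : Finset ℂ, (0 : ℂ) ∈ S ∧ ∀ l : ℂ, l ∉ S →
      ∀ a b c p : ℂ, c ≠ 0 → lineEqs l a b c p →
        ∃ β : (linePlane a b c p) →ₗ[ℂ] (Fin 6 → ℂ),
          ¬ (LinearMap.range β ≤ linePlane a b c p) ∧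
          ∀ P : linePlane a b c p,
            fderiv ℂ (Fcubic l) (P : Fin 6 → ℂ) (β P) = 0 ∧
            fderiv ℂ (Gcubic l) (P : Fin 6 → ℂ) (β P) = 0 := by
  classical
  refine ⟨insert 0 ((Polynomial.X ^ 6 - Polynomial.C 4 : Polynomial ℂ).roots.toFinset),
    Finset.mem_insert_self _ _, ?_⟩
  intro l hl a b c p hc heqs
  obtain ⟨h1, h2, h3, h4⟩ := heqs
  have hl0 : l ≠ 0 := fun h => hl (by simp [h])
  have hl6 : l ^ 6 ≠ 4 := by
    intro h6
    apply hl
    refine Finset.mem_insert_of_mem ?_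
    have hpne : (Polynomial.X ^ 6 - Polynomial.C 4 : Polynomial ℂ) ≠ 0 := by
      intro h
      have := congrArg (Polynomial.eval 0) h
      simp at this
    rw [Multiset.mem_toFinset, Polynomial.mem_roots hpne]
    simp [Polynomial.IsRoot, h6]
  have hc3 : (4:ℂ) * c ^ 3 - 1 ≠ 0 := by
    intro hz
    apply hl6
    have hcq : c ^ 3 = 1/4 := by linear_combination hz/4
    have h12 : (12:ℂ) - 3 * l ^ 6 = 0 := by
      linear_combination h4 - (64*c^3 + 48 - 16*l^6)*hcq
    linear_combination (-1/3 : ℂ) * h12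
  set k : ℂ := 12 * c / (4 * c ^ 3 - 1) with hkdef
  have hk : k * (4 * c ^ 3 - 1) = 12 * c := div_mul_cancel₀ _ hc3
  have hb3 : l^6 * b^3 = 64 * a^3 * c^3 := by
    linear_combination (l^4*b^2 + 4*a*c*l^2*b + 16*a^2*c^2) * h2
  have hkF : 12*c*b^3 = 32*l*c^3 - 2*l := by
    have hkF6 : l^6 * (12*c*b^3) = l^6 * (32*l*c^3 - 2*l) := by
      linear_combination 12*c*hb3 + 64*c^3*h3 + 2*l*h4
    exact mul_left_cancel₀ (pow_ne_zero 6 hl0) hkF6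
  have hE : k*b^3 - 2*l*k*c^2 - 2*l = 0 := by
    have hE1 : (k*b^3 - 2*l*k*c^2 - 2*l) * (4*c^3 - 1) = 0 := by
      linear_combination (b^3 - 2*l*c^2)*hk + hkF
    rcases mul_eq_zero.mp hE1 with h | h
    · exact h
    · exact absurd h hc3
  have hs2 : l*b + 2*c*p^2 = 0 := by
    have hs6 : l * (l*b + 2*c*p^2) = l * 0 := by
      linear_combination h2 + 2*c*h1
    exact mul_left_cancel₀ hl0 hs6
  have hEG : 2*k*c^3 - l*k*a^2*b - 4*c = 0 := by
    have hG6 : l * (12*c*(2*c^3 - l*a^2*b)) = l * (4*c*(4*c^3 - 1)) := by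
      linear_combination (-12*c*a^2)*h2 + (-4*c)*h3
    have hG1 := mul_left_cancel₀ hl0 hG6
    have hEG1 : (2*k*c^3 - l*k*a^2*b - 4*c) * (4*c^3 - 1) = 0 := by
      linear_combination (2*c^3 - l*a^2*b)*hk + hG1
    rcases mul_eq_zero.mp hEG1 with h | h
    · exact h
    · exact absurd h hc3
  -- the constant vectors
  set Bv : Fin 6 → ℂ := ![0, 0, k*p*b, k*p*c, k*p*c, 0] with hBv
  set Cv : Fin 6 → ℂ := ![0, 0, 0, -1, 1, 0] with hCv
  set M : (Fin 6 → ℂ) →ₗ[ℂ] (Fin 6 → ℂ) :=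
    ((LinearMap.proj (0 : Fin 6) : (Fin 6 → ℂ) →ₗ[ℂ] ℂ)
        - a • (LinearMap.proj (5 : Fin 6))).smulRight Bv
      + ((LinearMap.proj (5 : Fin 6) : (Fin 6 → ℂ) →ₗ[ℂ] ℂ)).smulRight Cv with hM
  have hfive : (5:Fin 6) = Fin.succ 4 := rfl
  have hMapp : ∀ x : Fin 6 → ℂ, M x = (x 0 - a * x 5) • Bv + x 5 • Cv := by
    intro x
    simp [hM, LinearMap.smulRight_apply, LinearMap.sub_apply, LinearMap.smul_apply,
      LinearMap.proj_apply, smul_eq_mul]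
  refine ⟨M.comp (linePlane a b c p).subtype, ?_, ?_⟩
  · -- range not contained in the plane
    intro hle
    have hv : (![a, a, b, c, c, 1] : Fin 6 → ℂ) ∈ linePlane a b c p :=
      Submodule.subset_span (Set.mem_insert_of_mem _ rfl)
    have hmem : M ![a, a, b, c, c, 1] ∈ linePlane a b c p :=
      hle ⟨⟨_, hv⟩, rfl⟩
    have hMv : M ![a, a, b, c, c, 1] = Cv := by
      rw [hMapp]
      simp [hfive, Matrix.cons_val_succ]
    rw [hMv] at hmem
    obtain ⟨s, t, hst⟩ := Submodule.mem_span_pair.mp hmem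
    have e5 := congrFun hst 5
    have e0 := congrFun hst 0
    have e3 := congrFun hst 3
    simp [hCv, hfive, Matrix.cons_val_succ, Pi.add_apply, Pi.smul_apply, smul_eq_mul] at e5 e0 e3
    have : (0:ℂ) = -1 := by linear_combination e3 - p*e0 + (p*a - c)*e5
    norm_num at this
  · intro P
    obtain ⟨s, t, hst⟩ := Submodule.mem_span_pair.mp P.2
    have hP5 : (P : Fin 6 → ℂ) 5 = t := by
      rw [← hst]; simp [hfive, Matrix.cons_val_succ]
    have hP0 : (P : Fin 6 → ℂ) 0 = s + t * a := by
      rw [← hst]; simp [Matrix.cons_val_succ]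
    have hβ : (M.comp (linePlane a b c p).subtype) P = s • Bv + t • Cv := by
      simp only [LinearMap.comp_apply, Submodule.subtype_apply]
      rw [hMapp, hP0, hP5]
      have : s + t * a - a * t = s := by ring
      rw [this]
    rw [hβ]
    have hx := hst.symm
    constructor
    · rw [fderiv_Fcubic, hx]
      simp [hBv, hCv, hfive, Matrix.cons_val_succ, Pi.add_apply, Pi.smul_apply, smul_eq_mul]
      linear_combination (3*s*t^2*p) * hE
    · rw [fderiv_Gcubic, hx]
      simp [hBv, hCv, hfive, Matrix.cons_val_succ, Pi.add_apply, Pi.smul_apply, smul_eq_mul]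
      linear_combination (3*s^3*k*p) * hs2 + (3*s*t^2*p) * hEG
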